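/- Let Γ be a positive affine semigroup and let ι : Γ → Γ̃ be a lift of Γ. Then ι is injective. -/

import Mathlib

open Matrix BigOperators

noncomputable section

/-- The ambient space `ℝ^n`. -/
abbrev V (n : ℕ) := Fin n → ℝ

/-- The difference set `Λ_Γ = {x - y : x, y ∈ Γ}` of a set `Γ ⊆ ℝ^n`. -/
def diffSet {n : ℕ} (Γ : Set (V n)) : Set (V n) := {z | ∃ x ∈ Γ, ∃ y ∈ Γ, z = x - y}

/-- A set is discrete if each of its points is isolated in it. -/
def IsDiscreteSet {n : ℕ} (Λ : Set (V n)) : Prop :=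
  ∀ x ∈ Λ, ∃ ε : ℝ, 0 < ε ∧ ∀ y ∈ Λ, dist y x < ε → y = x

/-- An affine semigroup: a finitely generated additive submonoid of `ℝ^n` whose
difference group is discrete (a lattice). -/
def IsAffineSemigroup {n : ℕ} (Γ : Set (V n)) : Prop :=
  (∃ S : Finset (V n), (AddSubmonoid.closure (S : Set (V n)) : Set (V n)) = Γ) ∧
    IsDiscreteSet (diffSet Γ)

/-- A set is positive if `0` is its only element whose negative also belongs to it. -/
def IsPositive {n : ℕ} (Γ : Set (V n)) : Prop := ∀ x ∈ Γ, -x ∈ Γ → x = 0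

/-- The convex cone `K_Γ` of all nonnegative real combinations of elements of `Γ`. -/
def coneOf {n : ℕ} (Γ : Set (V n)) : Set (V n) :=
  {y | ∃ (k : ℕ) (c : Fin k → ℝ) (v : Fin k → V n),
    (∀ i, 0 ≤ c i) ∧ (∀ i, v i ∈ Γ) ∧ y = ∑ i, c i • v i}

/-- The dual cone `K* = {y : ⟨x,y⟩ ≥ 0 for all x ∈ K}`. -/
def dualCone {n : ℕ} (K : Set (V n)) : Set (V n) := {y | ∀ x ∈ K, 0 ≤ x ⬝ᵥ y}

/-- The dual lattice `Λ* = {w ∈ span(Λ) : ⟨w,v⟩ ∈ ℤ for all v ∈ Λ}`. -/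
def dualLattice {n : ℕ} (Λ : Set (V n)) : Set (V n) :=
  {w | w ∈ Submodule.span ℝ Λ ∧ ∀ v ∈ Λ, ∃ m : ℤ, w ⬝ᵥ v = (m : ℝ)}

/-- The dual affine semigroup `Γ* = (Λ_Γ)* ∩ (K_Γ)*`. -/
def dualSemigroup {n : ℕ} (Γ : Set (V n)) : Set (V n) :=
  dualLattice (diffSet Γ) ∩ dualCone (coneOf Γ)

/-- `A` generates the additive monoid `Γ`. -/
def IsGenSet {n : ℕ} (A Γ : Set (V n)) : Prop := (AddSubmonoid.closure A : Set (V n)) = Γ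

/-- `A` is a minimal generating set of the additive monoid `Γ`: it generates, and no
proper subset of it generates. -/
def IsMinGenSet {n : ℕ} (A Γ : Set (V n)) : Prop :=
  IsGenSet A Γ ∧ ∀ B ⊂ A, ¬ IsGenSet B Γ

/-- `S` is the slack matrix of the positive affine semigroup `Γ`: its `(i,j)` entry is
`⟨a i, b j⟩` where `a`, `b` enumerate the minimal generating sets of `Γ` and `Γ*`. -/
def IsSlackMatrix {n k l : ℕ} (Γ : Set (V n)) (S : Matrix (Fin k) (Fin l) ℤ) : Prop :=
  ∃ (a : Fin k → V n) (b : Fin l → V n),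
    Function.Injective a ∧ Function.Injective b ∧
    IsMinGenSet (Set.range a) Γ ∧ IsMinGenSet (Set.range b) (dualSemigroup Γ) ∧
    ∀ i j, (S i j : ℝ) = a i ⬝ᵥ b j

/-- The `i`-th row of an integer matrix, viewed as a real vector. -/
def rowVec {k l : ℕ} (S : Matrix (Fin k) (Fin l) ℤ) (i : Fin k) : V l := fun j => (S i j : ℝ)

/-- The `j`-th column of an integer matrix, viewed as a real vector. -/
def colVec {k l : ℕ} (S : Matrix (Fin k) (Fin l) ℤ) (j : Fin l) : V k := fun i => (S i j : ℝ)

/-- `Γ_S^row`: all nonnegative integer combinations of the rows of `S`. -/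
def GammaRow {k l : ℕ} (S : Matrix (Fin k) (Fin l) ℤ) : Set (V l) :=
  {x | ∃ c : Fin k → ℕ, x = ∑ i, (c i : ℝ) • rowVec S i}

/-- `Γ_S^col`: all nonnegative integer combinations of the columns of `S`. -/
def GammaCol {k l : ℕ} (S : Matrix (Fin k) (Fin l) ℤ) : Set (V k) :=
  {x | ∃ c : Fin l → ℕ, x = ∑ j, (c j : ℝ) • colVec S j}

/-- `Λ_S^row`: all integer combinations of the rows of `S`. -/
def LambdaRow {k l : ℕ} (S : Matrix (Fin k) (Fin l) ℤ) : Set (V l) :=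
  {x | ∃ c : Fin k → ℤ, x = ∑ i, (c i : ℝ) • rowVec S i}

/-- `Λ_S^col`: all integer combinations of the columns of `S`. -/
def LambdaCol {k l : ℕ} (S : Matrix (Fin k) (Fin l) ℤ) : Set (V k) :=
  {x | ∃ c : Fin l → ℤ, x = ∑ j, (c j : ℝ) • colVec S j}

/-- `K_S^row`: all nonnegative real combinations of the rows of `S`. -/
def KRow {k l : ℕ} (S : Matrix (Fin k) (Fin l) ℤ) : Set (V l) :=
  {x | ∃ c : Fin k → ℝ, (∀ i, 0 ≤ c i) ∧ x = ∑ i, c i • rowVec S i}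

/-- `K_S^col`: all nonnegative real combinations of the columns of `S`. -/
def KCol {k l : ℕ} (S : Matrix (Fin k) (Fin l) ℤ) : Set (V k) :=
  {x | ∃ c : Fin l → ℝ, (∀ j, 0 ≤ c j) ∧ x = ∑ j, c j • colVec S j}

/-- `Row(S)`: the row space of `S` over `ℝ`. -/
def RowSpace {k l : ℕ} (S : Matrix (Fin k) (Fin l) ℤ) : Set (V l) :=
  (Submodule.span ℝ (Set.range (rowVec S)) : Set (V l))

/-- `Col(S)`: the column space of `S` over `ℝ`. -/
def ColSpace {k l : ℕ} (S : Matrix (Fin k) (Fin l) ℤ) : Set (V k) :=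
  (Submodule.span ℝ (Set.range (colVec S)) : Set (V k))

/-- `ℤ^l` viewed inside `ℝ^l`. -/
def intPts (l : ℕ) : Set (V l) := {x | ∀ j, ∃ m : ℤ, x j = (m : ℝ)}

/-- `ℤ₊^l` viewed inside `ℝ^l`. -/
def nnIntPts (l : ℕ) : Set (V l) := {x | ∀ j, ∃ m : ℕ, x j = (m : ℝ)}

/-- `ℝ₊^l`: the nonnegative orthant. -/
def nnPts (l : ℕ) : Set (V l) := {x | ∀ j, 0 ≤ x j}

/-- `ι` (a linear map restricting to an additive semigroup homomorphism `Γ → Γ'`) is a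
lift of the positive affine semigroup `Γ`: `Γ'` is a positive affine semigroup and the
adjoint `ι*` (characterized on `Γ` by `⟨x, ι*(y)⟩ = ⟨ι(x), y⟩`) satisfies
`ι*(Γ'*) = Γ*`. -/
structure IsLift {n N : ℕ} (Γ : Set (V n)) (Γ' : Set (V N)) (ι : (V n) →ₗ[ℝ] (V N)) : Prop where
  lift_semigroup : IsAffineSemigroup Γ'
  lift_positive : IsPositive Γ'
  maps_to : ∀ x ∈ Γ, ι x ∈ Γ'
  adjoint_mem : ∀ y ∈ dualSemigroup Γ', ∃ z ∈ dualSemigroup Γ, ∀ x ∈ Γ, x ⬝ᵥ z = (ι x) ⬝ᵥ y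
  adjoint_surj : ∀ z ∈ dualSemigroup Γ, ∃ y ∈ dualSemigroup Γ', ∀ x ∈ Γ, x ⬝ᵥ z = (ι x) ⬝ᵥ y

/-- The nonnegative integer rank: the least inner dimension of a factorization
`A = B * C` with `B`, `C` nonnegative integer matrices. -/
def nnIntRank {m l : Type*} [Fintype m] [Fintype l] (A : Matrix m l ℤ) : ℕ :=
  sInf {r : ℕ | ∃ (B : Matrix m (Fin r) ℤ) (C : Matrix (Fin r) l ℤ),
    (∀ i j, 0 ≤ B i j) ∧ (∀ i j, 0 ≤ C i j) ∧ A = B * C}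

/-- The nonnegative rank: the least inner dimension of a factorization
`A = B * C` with `B`, `C` nonnegative real matrices. -/
def nnRank {m l : Type*} [Fintype m] [Fintype l] (A : Matrix m l ℤ) : ℕ :=
  sInf {r : ℕ | ∃ (B : Matrix m (Fin r) ℝ) (C : Matrix (Fin r) l ℝ),
    (∀ i j, 0 ≤ B i j) ∧ (∀ i j, 0 ≤ C i j) ∧ A.map (fun z => (z : ℝ)) = B * C}

/-- The Fibonacci semigroup `Γ^Fib_n = ℤ² ∩ {(x,y) : 0 ≤ F_{2n}·y ≤ F_{2n+2}·x}`
(with `Nat.fib`, so `F 1 = F 2 = 1`). -/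
def GammaFib (n : ℕ) : Set (V 2) :=
  {p | (∃ a : ℤ, p 0 = (a : ℝ)) ∧ (∃ b : ℤ, p 1 = (b : ℝ)) ∧
    0 ≤ (Nat.fib (2 * n) : ℝ) * p 1 ∧
    (Nat.fib (2 * n) : ℝ) * p 1 ≤ (Nat.fib (2 * n + 2) : ℝ) * p 0}

/-- Fibonacci numbers extended to negative indices by `F_{-m} = (-1)^{m+1} F_m`. -/
def fibZ (m : ℤ) : ℤ :=
  if 0 ≤ m then (Nat.fib m.toNat : ℤ)
  else (-1) ^ ((-m).toNat + 1) * (Nat.fib (-m).toNat : ℤ)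

/-- The `(n+1) × (n+1)` Toeplitz matrix with `(i,j)` entry `F_{2(i-j)+1}`. -/
def Mfib (n : ℕ) : Matrix (Fin (n + 1)) (Fin (n + 1)) ℤ :=
  fun i j => fibZ (2 * ((i : ℤ) - (j : ℤ)) + 1)

/-- `‖A‖₁`: the sum of all entries of a matrix. -/
def entrySum {m l : Type*} [Fintype m] [Fintype l] (A : Matrix m l ℤ) : ℤ := ∑ i, ∑ j, A i j

lemma sum_dotProduct' {k : ℕ} {α : Type*} (s : Finset α) (f : α → V k) (w : V k) :
    (∑ i ∈ s, f i) ⬝ᵥ w = ∑ i ∈ s, f i ⬝ᵥ w := by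
  simp only [dotProduct, Finset.sum_apply, Finset.sum_mul]
  exact Finset.sum_comm

lemma dotProduct_sum' {k : ℕ} {α : Type*} (s : Finset α) (w : V k) (f : α → V k) :
    w ⬝ᵥ (∑ i ∈ s, f i) = ∑ i ∈ s, w ⬝ᵥ f i := by
  simp only [dotProduct, Finset.sum_apply, Finset.mul_sum]
  exact Finset.sum_comm

lemma discrete_of_separated {X : Type*} [MetricSpace X] {s : Set X} {ε : ℝ}
    (hε : 0 < ε) (h : ∀ a ∈ s, ∀ b ∈ s, dist a b < ε → a = b) : DiscreteTopology s := by
  rw [discreteTopology_iff_isOpen_singleton]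
  rintro ⟨x, hx⟩
  have hset : {(⟨x, hx⟩ : s)} = (Subtype.val : s → X) ⁻¹' (Metric.ball x ε) := by
    ext ⟨y, hy⟩
    simp only [Set.mem_singleton_iff, Set.mem_preimage, Metric.mem_ball, Subtype.mk.injEq]
    constructor
    · rintro rfl; simpa using hε
    · intro hd; exact h y hy x hx hd
  rw [hset]
  exact Metric.isOpen_ball.preimage continuous_subtype_val

set_option maxHeartbeats 2000000 in
set_option synthInstance.maxHeartbeats 400000 in
theorem sep_lemma {n : ℕ} {Γ : Set (V n)} (hΓ : IsAffineSemigroup Γ) (hpos : IsPositive Γ)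
    {w : V n} (hw : w ∈ diffSet Γ) (hz : ∀ z ∈ dualSemigroup Γ, w ⬝ᵥ z = 0) : w = 0 := by
  classical
  by_contra hw0
  obtain ⟨⟨S, hSgen⟩, hdisc⟩ := hΓ
  -- basic facts about Γ
  have hΓ0 : (0 : V n) ∈ Γ := by rw [← hSgen]; exact (AddSubmonoid.closure _).zero_mem
  have hΓadd : ∀ a ∈ Γ, ∀ b ∈ Γ, a + b ∈ Γ := by
    intro a ha b hb
    rw [← hSgen] at ha hb ⊢
    exact (AddSubmonoid.closure _).add_mem ha hb
  have hSΓ : ∀ s ∈ S, s ∈ Γ := fun s hs => by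
    rw [← hSgen]; exact AddSubmonoid.subset_closure hs
  -- the difference group
  set Λ : Set (V n) := diffSet Γ with hΛdef
  have hΛ0 : (0 : V n) ∈ Λ := ⟨0, hΓ0, 0, hΓ0, by simp⟩
  have hΛneg : ∀ v ∈ Λ, -v ∈ Λ := by
    rintro v ⟨a, ha, b, hb, rfl⟩; exact ⟨b, hb, a, ha, by abel⟩
  have hΛadd : ∀ v ∈ Λ, ∀ u ∈ Λ, v + u ∈ Λ := by
    rintro v ⟨a, ha, b, hb, rfl⟩ u ⟨c, hc, d, hd, rfl⟩
    exact ⟨a + c, hΓadd _ ha _ hc, b + d, hΓadd _ hb _ hd, by abel⟩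
  have hΛsub : ∀ v ∈ Λ, ∀ u ∈ Λ, v - u ∈ Λ := by
    intro v hv u hu
    have := hΛadd v hv (-u) (hΛneg u hu)
    rwa [← sub_eq_add_neg] at this
  have hΓΛ : ∀ x ∈ Γ, x ∈ Λ := fun x hx => ⟨x, hx, 0, hΓ0, by simp⟩
  -- uniform separation
  obtain ⟨ε, hε, hsep0⟩ := hdisc 0 hΛ0
  have hsep : ∀ a ∈ Λ, ∀ b ∈ Λ, dist a b < ε → a = b := by
    intro a ha b hb hab
    have h1 : a - b ∈ Λ := hΛsub a ha b hb
    have h2 : dist (a - b) 0 < ε := by rwa [dist_zero_right, ← dist_eq_norm]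
    exact sub_eq_zero.mp (hsep0 _ h1 h2)
  -- Λ as an additive subgroup
  set ΛG : AddSubgroup (V n) :=
    { carrier := Λ
      zero_mem' := hΛ0
      add_mem' := fun ha hb => hΛadd _ ha _ hb
      neg_mem' := fun ha => hΛneg _ ha } with hΛG
  haveI hdiscΛ : DiscreteTopology (Λ : Set (V n)) := discrete_of_separated hε hsep
  haveI : DiscreteTopology ↥ΛG := hdiscΛ
  have hclosed : IsClosed Λ := AddSubgroup.isClosed_of_discrete (H := ΛG)
  have hfin : ∀ R : ℝ, (Metric.closedBall (0 : V n) R ∩ Λ).Finite := fun R =>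
    Metric.finite_isBounded_inter_isClosed DiscreteTopology.isDiscrete Metric.isBounded_closedBall hclosed
  -- S₀
  set S₀ : Finset (V n) := S.erase 0 with hS₀
  -- 0 is not in the convex hull of S₀
  have hconv : (0 : V n) ∉ convexHull ℝ (↑S₀ : Set (V n)) := by
    intro h0
    rw [Finset.convexHull_eq] at h0
    obtain ⟨t, ht0, hsum1, hcm⟩ := h0
    rw [Finset.centerMass_eq_of_sum_1 _ _ hsum1] at hcm
    simp only [id_eq] at hcm
    obtain ⟨sstar, hsstar_mem, hsstar_pos⟩ : ∃ s ∈ S₀, 0 < t s := by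
      by_contra hcon
      push_neg at hcon
      have hle : ∑ y ∈ S₀, t y ≤ 0 := Finset.sum_nonpos hcon
      rw [hsum1] at hle; linarith
    set p : ℕ → V n := fun m => ∑ s ∈ S₀, ((⌊(m : ℝ) * t s⌋₊ : ℝ)) • s with hp
    have hsmulΓ : ∀ (k : ℕ), ∀ s ∈ S, (k : ℝ) • s ∈ AddSubmonoid.closure (S : Set (V n)) := by
      intro k s hs
      rw [Nat.cast_smul_eq_nsmul]
      exact nsmul_mem (AddSubmonoid.subset_closure (Finset.mem_coe.mpr hs)) _
    have hpΓ : ∀ m, p m ∈ Γ := by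
      intro m
      rw [← hSgen]
      show p m ∈ AddSubmonoid.closure (S : Set (V n))
      exact AddSubmonoid.sum_mem _ fun s hs => hsmulΓ _ s (Finset.mem_of_mem_erase hs)
    have hpbound : ∀ m, ‖p m‖ ≤ ∑ s ∈ S₀, ‖s‖ := by
      intro m
      have key : p m = ∑ s ∈ S₀, (((⌊(m : ℝ) * t s⌋₊ : ℝ)) - (m : ℝ) * t s) • s := by
        rw [hp]
        simp only [sub_smul]
        rw [Finset.sum_sub_distrib]
        have h0 : ∑ s ∈ S₀, ((m : ℝ) * t s) • s = (m : ℝ) • ∑ s ∈ S₀, t s • s := by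
          rw [Finset.smul_sum]
          exact Finset.sum_congr rfl fun s _ => (mul_smul _ _ _)
        rw [h0, hcm, smul_zero, sub_zero]
      rw [key]
      refine (norm_sum_le _ _).trans (Finset.sum_le_sum fun s hs => ?_)
      rw [norm_smul, Real.norm_eq_abs]
      have hx0 : (0 : ℝ) ≤ (m : ℝ) * t s :=
        mul_nonneg (Nat.cast_nonneg _) (ht0 s hs)
      have hfl : (⌊(m : ℝ) * t s⌋₊ : ℝ) ≤ (m : ℝ) * t s := Nat.floor_le hx0
      have hfl2 : (m : ℝ) * t s < (⌊(m : ℝ) * t s⌋₊ : ℝ) + 1 := Nat.lt_floor_add_one _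
      have habs : |(⌊(m : ℝ) * t s⌋₊ : ℝ) - (m : ℝ) * t s| ≤ 1 := by
        rw [abs_le]; constructor <;> linarith
      calc |(⌊(m : ℝ) * t s⌋₊ : ℝ) - (m : ℝ) * t s| * ‖s‖
          ≤ 1 * ‖s‖ := mul_le_mul_of_nonneg_right habs (norm_nonneg _)
        _ = ‖s‖ := one_mul _
    have hrange : ∀ m, p m ∈ Metric.closedBall (0 : V n) (∑ s ∈ S₀, ‖s‖) ∩ Λ := fun m =>
      ⟨Metric.mem_closedBall.mpr (by rw [dist_zero_right]; exact hpbound m), hΓΛ _ (hpΓ m)⟩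
    haveI : Finite ↥(Metric.closedBall (0 : V n) (∑ s ∈ S₀, ‖s‖) ∩ Λ) :=
      (hfin _).to_subtype
    obtain ⟨y0, hy0⟩ := Finite.exists_infinite_fiber
      (fun m : ℕ => (⟨p m, hrange m⟩ : ↥(Metric.closedBall (0 : V n) (∑ s ∈ S₀, ‖s‖) ∩ Λ)))
    have hfib : {m : ℕ | p m = (y0 : V n)}.Infinite := by
      have : ((fun m : ℕ => (⟨p m, hrange m⟩ :
          ↥(Metric.closedBall (0 : V n) (∑ s ∈ S₀, ‖s‖) ∩ Λ))) ⁻¹' {y0}) =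
          {m : ℕ | p m = (y0 : V n)} := by
        ext m
        simp [Subtype.ext_iff]
      rw [← this]
      exact Set.infinite_coe_iff.mp hy0
    obtain ⟨m, hm⟩ := hfib.nonempty
    obtain ⟨m', hm', hlt⟩ := hfib.exists_gt
      (max m ⌈((⌊(m : ℝ) * t sstar⌋₊ : ℝ) + 1) / t sstar⌉₊)
    have hmm' : m ≤ m' := ((le_max_left _ _).trans_lt hlt).le
    have hfle : ⌊(m : ℝ) * t sstar⌋₊ + 1 ≤ ⌊(m' : ℝ) * t sstar⌋₊ := by
      apply Nat.le_floor
      have hc : ((⌊(m : ℝ) * t sstar⌋₊ : ℝ) + 1) / t sstar < (m' : ℝ) := by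
        calc ((⌊(m : ℝ) * t sstar⌋₊ : ℝ) + 1) / t sstar
            ≤ (⌈((⌊(m : ℝ) * t sstar⌋₊ : ℝ) + 1) / t sstar⌉₊ : ℝ) := Nat.le_ceil _
          _ < (m' : ℝ) := by exact_mod_cast (le_max_right m _).trans_lt hlt
      have := (div_lt_iff₀ hsstar_pos).mp hc
      push_cast
      linarith
    set c : V n → ℕ := fun s => ⌊(m' : ℝ) * t s⌋₊ - ⌊(m : ℝ) * t s⌋₊ with hcdef
    have hmono : ∀ s ∈ S₀, ⌊(m : ℝ) * t s⌋₊ ≤ ⌊(m' : ℝ) * t s⌋₊ := fun s hs =>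
      Nat.floor_mono (mul_le_mul_of_nonneg_right (by exact_mod_cast hmm') (ht0 s hs))
    have hcast : ∀ s ∈ S₀,
        ((c s : ℝ)) = (⌊(m' : ℝ) * t s⌋₊ : ℝ) - (⌊(m : ℝ) * t s⌋₊ : ℝ) := fun s hs => by
      rw [hcdef]
      push_cast [Nat.cast_sub (hmono s hs)]
      ring
    have hdiffzero : ∑ s ∈ S₀, (c s : ℝ) • s = 0 := by
      have hpm : p m = (y0 : V n) := hm
      have hpm' : p m' = (y0 : V n) := hm'
      calc ∑ s ∈ S₀, (c s : ℝ) • s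
          = ∑ s ∈ S₀, ((⌊(m' : ℝ) * t s⌋₊ : ℝ) • s - (⌊(m : ℝ) * t s⌋₊ : ℝ) • s) :=
            Finset.sum_congr rfl fun s hs => by rw [hcast s hs, sub_smul]
        _ = p m' - p m := Finset.sum_sub_distrib _ _
        _ = 0 := by rw [hpm, hpm', sub_self]
    have hx0Γ : (c sstar : ℝ) • sstar ∈ Γ := by
      rw [← hSgen]
      exact hsmulΓ _ sstar (Finset.mem_of_mem_erase hsstar_mem)
    have hnegΓ : -((c sstar : ℝ) • sstar) ∈ Γ := by
      have hsplit : (c sstar : ℝ) • sstar + ∑ s ∈ S₀.erase sstar, (c s : ℝ) • s = 0 := by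
        rw [Finset.add_sum_erase S₀ (fun s => (c s : ℝ) • s) hsstar_mem]
        exact hdiffzero
      have hneg : -((c sstar : ℝ) • sstar) = ∑ s ∈ S₀.erase sstar, (c s : ℝ) • s :=
        neg_eq_of_add_eq_zero_right hsplit
      rw [hneg, ← hSgen]
      show _ ∈ AddSubmonoid.closure (S : Set (V n))
      exact AddSubmonoid.sum_mem _ fun s hs =>
        hsmulΓ _ s (Finset.mem_of_mem_erase (Finset.mem_of_mem_erase hs))
    have hzero := hpos _ hx0Γ hnegΓ
    have hcpos : 0 < c sstar := by
      show 0 < ⌊(m' : ℝ) * t sstar⌋₊ - ⌊(m : ℝ) * t sstar⌋₊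
      omega
    rcases smul_eq_zero.mp hzero with h | h
    · exact absurd h (Nat.cast_ne_zero.mpr hcpos.ne')
    · exact (Finset.mem_erase.mp hsstar_mem).1 h
  -- separating functional
  have hcompact : IsCompact (convexHull ℝ (↑S₀ : Set (V n))) :=
    S₀.finite_toSet.isCompact_convexHull ℝ
  obtain ⟨f, u, hfu0, hfub⟩ := geometric_hahn_banach_point_closed
    (convex_convexHull ℝ (↑S₀ : Set (V n))) hcompact.isClosed hconv
  have hu0 : (0 : ℝ) < u := by simpa using hfu0
  set uvec : V n := fun j => f (Pi.single j 1) with huvec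
  have hfrep : ∀ x : V n, f x = x ⬝ᵥ uvec := by
    intro x
    have hxdec : x = ∑ j, Pi.single j (x j) := (Finset.univ_sum_single x).symm
    have : f x = ∑ j, x j * f (Pi.single j 1) := by
      conv_lhs => rw [hxdec]
      rw [map_sum]
      refine Finset.sum_congr rfl fun j _ => ?_
      have : Pi.single j (x j) = x j • (Pi.single j 1 : V n) := by
        rw [← Pi.single_smul, smul_eq_mul, mul_one]
      rw [this, _root_.map_smul, smul_eq_mul]
    rw [this]
    rfl
  have husep : ∀ s ∈ S₀, 0 < s ⬝ᵥ uvec := by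
    intro s hs
    have := hfub s (subset_convexHull ℝ _ (Finset.mem_coe.mpr hs))
    rw [hfrep] at this
    linarith
  -- the lattice in the span
  set E : Submodule ℝ (V n) := Submodule.span ℝ Λ with hEdef
  have hΛE : ∀ v ∈ Λ, v ∈ E := fun v hv => Submodule.subset_span hv
  set L : Submodule ℤ ↥E :=
    (AddSubgroup.toIntSubmodule ΛG).comap ((E.subtype).restrictScalars ℤ) with hLdef
  have hLmem : ∀ x : ↥E, x ∈ L ↔ (x : V n) ∈ Λ := fun x => Iff.rfl
  haveI hdiscL : DiscreteTopology ↥L := by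
    have : DiscreteTopology ↥(L : Set ↥E) := by
      refine discrete_of_separated hε ?_
      intro a ha b hb hab
      have hab' : dist (a : V n) (b : V n) < ε := by rwa [← Subtype.dist_eq]
      exact Subtype.ext (hsep _ ha _ hb hab')
    exact this
  haveI hzl : IsZLattice ℝ L := by
    refine ⟨?_⟩
    apply Submodule.map_injective_of_injective (Submodule.injective_subtype E)
    rw [Submodule.map_span, Submodule.map_top, Submodule.range_subtype]
    have himg : (E.subtype) '' (L : Set ↥E) = Λ := by
      ext v
      constructor
      · rintro ⟨x, hx, rfl⟩; exact hx
      · intro hv; exact ⟨⟨v, hΛE v hv⟩, hv, rfl⟩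
    rw [himg]
  haveI := ZLattice.module_free ℝ L
  haveI := ZLattice.module_finite ℝ L
  set ι' := Module.Free.ChooseBasisIndex ℤ ↥L with hι'
  haveI : Fintype ι' := inferInstance
  haveI : DecidableEq ι' := Classical.decEq _
  set b : Module.Basis ι' ℤ ↥L := Module.Free.chooseBasis ℤ ↥L with hb
  set bE : Module.Basis ι' ℝ ↥E := Module.Basis.ofZLatticeBasis ℝ L b with hbE
  -- coercion of basis expansion
  have hcoe : ∀ x : ↥E, (x : V n) = ∑ j, bE.repr x j • (bE j : V n) := by
    intro x
    conv_lhs => rw [← Module.Basis.sum_repr bE x]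
    simp only [Submodule.coe_sum, Submodule.coe_smul]
  -- the dual family
  set φ : ι' → (↥E →ₗ[ℝ] ℝ) := fun i =>
    { toFun := fun z => ((bE i : V n)) ⬝ᵥ (z : V n)
      map_add' := fun a b => by simp [dotProduct_add]
      map_smul' := fun r a => by simp [dotProduct_smul] } with hφ
  set df : ↥E →ₗ[ℝ] (ι' → ℝ) := LinearMap.pi φ with hdf
  have hdfapp : ∀ (z : ↥E) (i : ι'), df z i = (bE i : V n) ⬝ᵥ (z : V n) := fun z i => rfl
  have hdfinj : Function.Injective df := by
    rw [injective_iff_map_eq_zero]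
    intro z hz0
    have hcoords : ∀ i, (bE i : V n) ⬝ᵥ (z : V n) = 0 := by
      intro i
      have := congrFun hz0 i
      rwa [hdfapp] at this
    have hzz : (z : V n) ⬝ᵥ (z : V n) = 0 := by
      have h1 : (z : V n) ⬝ᵥ (z : V n) = (∑ j, bE.repr z j • (bE j : V n)) ⬝ᵥ (z : V n) := by
        rw [← hcoe z]
      rw [h1, sum_dotProduct']
      refine Finset.sum_eq_zero fun i _ => ?_
      rw [smul_dotProduct, hcoords i, smul_eq_mul, mul_zero]
    have : (z : V n) = 0 := dotProduct_self_eq_zero.mp hzz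
    exact Subtype.ext this
  have hdfsurj : Function.Surjective df := by
    refine (LinearMap.injective_iff_surjective_of_finrank_eq_finrank ?_).mp hdfinj
    rw [Module.finrank_eq_card_basis bE, Module.finrank_fintype_fun_eq_card]
  set wv : ι' → ↥E := fun i => Function.surjInv hdfsurj (Pi.single i 1 : ι' → ℝ) with hwvdef
  have hwv : ∀ i j, (bE j : V n) ⬝ᵥ (wv i : V n) = if j = i then 1 else 0 := by
    intro i j
    have := congrFun (Function.surjInv_eq hdfsurj (Pi.single i 1 : ι' → ℝ)) j
    rw [hdfapp] at this
    rw [this, Pi.single_apply]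
  have hrepr : ∀ (x : ↥E) (i : ι'), (x : V n) ⬝ᵥ (wv i : V n) = bE.repr x i := by
    intro x i
    conv_lhs => rw [hcoe x]
    rw [sum_dotProduct']
    simp only [smul_dotProduct, hwv, smul_eq_mul, mul_ite, mul_one, mul_zero]
    simp
  -- integrality of coordinates of lattice vectors
  have hreprInt : ∀ (v : V n) (hv : v ∈ Λ) (i : ι'),
      ∃ mz : ℤ, bE.repr ⟨v, hΛE v hv⟩ i = (mz : ℝ) := by
    intro v hv i
    refine ⟨b.repr ⟨⟨v, hΛE v hv⟩, hv⟩ i, ?_⟩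
    rw [hbE]
    have h := (Module.Basis.ofZLatticeBasis_repr_apply ℝ L b ⟨⟨v, hΛE v hv⟩, hv⟩ i).symm
    show ((Module.Basis.ofZLatticeBasis ℝ L b).repr (((⟨⟨v, hΛE v hv⟩, hv⟩ : ↥L) : ↥E))) i
      = ((b.repr ⟨⟨v, hΛE v hv⟩, hv⟩ i : ℤ) : ℝ)
    exact h.symm
  -- w as an element of E, and a coordinate where it does not vanish
  have hwE : w ∈ E := hΛE w hw
  set wE : ↥E := ⟨w, hwE⟩ with hwEdef
  obtain ⟨i₀, hi₀⟩ : ∃ i, bE.repr wE i ≠ 0 := by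
    by_contra hcon
    push_neg at hcon
    apply hw0
    have : wE = 0 := by
      have h0 : bE.repr wE = 0 := Finsupp.ext hcon
      exact (LinearEquiv.map_eq_zero_iff bE.repr).mp h0
    simpa [hwEdef] using congrArg Subtype.val this
  -- expansion of the dot product against uvec
  have hdotu : ∀ x : ↥E, (x : V n) ⬝ᵥ uvec = ∑ i, bE.repr x i * ((bE i : V n) ⬝ᵥ uvec) := by
    intro x
    conv_lhs => rw [hcoe x]
    rw [sum_dotProduct']
    simp only [smul_dotProduct, smul_eq_mul]
  -- subtype elements for members of E
  set rE : V n → ↥E := fun s => if h : s ∈ E then (⟨s, h⟩ : ↥E) else 0 with hrEdef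
  have hrEeq : ∀ (s : V n) (hsE : s ∈ E), rE s = ⟨s, hsE⟩ := fun s hsE => by
    simp [hrEdef, dif_pos hsE]
  -- choose D
  set q : V n → ℝ := fun s => (∑ i, |bE.repr (rE s) i| + 1) / (s ⬝ᵥ uvec) with hq
  set D : ℕ := S₀.sup (fun s => ⌈q s⌉₊) + 1 with hD
  have hDq : ∀ s ∈ S₀, q s < (D : ℝ) := by
    intro s hs
    calc q s ≤ (⌈q s⌉₊ : ℝ) := Nat.le_ceil _
      _ ≤ ((S₀.sup (fun s => ⌈q s⌉₊) : ℕ) : ℝ) := by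
          have hle : ⌈q s⌉₊ ≤ S₀.sup (fun s => ⌈q s⌉₊) := Finset.le_sup (f := fun s => ⌈q s⌉₊) hs
          exact_mod_cast hle
      _ < (D : ℝ) := by exact_mod_cast Nat.lt_succ_self _
  set d : ι' → ℤ := fun i => ⌊(D : ℝ) * ((bE i : V n) ⬝ᵥ uvec)⌋ with hd
  set Rf : ↥E → ℝ := fun x => ∑ i, (d i : ℝ) * bE.repr x i with hRf
  -- Rf is at least 1 on the nonzero generators
  have hRf_pos : ∀ s ∈ S₀, ∀ (hsE : s ∈ E), (1 : ℝ) ≤ Rf ⟨s, hsE⟩ := by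
    intro s hs hsE
    have hru : s ⬝ᵥ uvec = ∑ i, bE.repr ⟨s, hsE⟩ i * ((bE i : V n) ⬝ᵥ uvec) := hdotu ⟨s, hsE⟩
    have hterm : ∀ i, (D : ℝ) * ((bE i : V n) ⬝ᵥ uvec) * bE.repr ⟨s, hsE⟩ i
        - |bE.repr ⟨s, hsE⟩ i| ≤ (d i : ℝ) * bE.repr ⟨s, hsE⟩ i := by
      intro i
      set ci := (bE i : V n) ⬝ᵥ uvec
      set ri := bE.repr ⟨s, hsE⟩ i
      have h1 : (d i : ℝ) ≤ (D : ℝ) * ci := Int.floor_le _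
      have h2 : (D : ℝ) * ci - 1 < (d i : ℝ) := Int.sub_one_lt_floor _
      rcases le_or_gt 0 ri with hri | hri
      · have habs : |ri| = ri := abs_of_nonneg hri
        nlinarith
      · have habs : |ri| = -ri := abs_of_neg hri
        nlinarith
    have hsum : (D : ℝ) * (s ⬝ᵥ uvec) - ∑ i, |bE.repr ⟨s, hsE⟩ i| ≤ Rf ⟨s, hsE⟩ := by
      rw [hru, Finset.mul_sum, ← Finset.sum_sub_distrib]
      refine Finset.sum_le_sum fun i _ => ?_
      have := hterm i
      linarith [this]
    have hqs : q s < (D : ℝ) := hDq s hs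
    have hsu : 0 < s ⬝ᵥ uvec := husep s hs
    have hre : rE s = ⟨s, hsE⟩ := hrEeq s hsE
    have hqval : q s = (∑ i, |bE.repr ⟨s, hsE⟩ i| + 1) / (s ⬝ᵥ uvec) := by
      simp only [hq, hre]
    have hDu : ∑ i, |bE.repr ⟨s, hsE⟩ i| + 1 < (D : ℝ) * (s ⬝ᵥ uvec) := by
      rw [hqval] at hqs
      exact (div_lt_iff₀ hsu).mp hqs
    linarith
  -- choose N₀
  set N₀ : ℕ := S₀.sup (fun s => ⌈|bE.repr (rE s) i₀|⌉₊) + 1 with hN₀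
  have hN₀b : ∀ s ∈ S₀, ∀ (hsE : s ∈ E), |bE.repr ⟨s, hsE⟩ i₀| < (N₀ : ℝ) := by
    intro s hs hsE
    rw [← hrEeq s hsE]
    calc |bE.repr (rE s) i₀| ≤ (⌈|bE.repr (rE s) i₀|⌉₊ : ℝ) := Nat.le_ceil _
      _ ≤ ((S₀.sup (fun s => ⌈|bE.repr (rE s) i₀|⌉₊) : ℕ) : ℝ) := by
          have hle : ⌈|bE.repr (rE s) i₀|⌉₊ ≤ S₀.sup (fun s => ⌈|bE.repr (rE s) i₀|⌉₊) :=
            Finset.le_sup (f := fun s => ⌈|bE.repr (rE s) i₀|⌉₊) hs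
          exact_mod_cast hle
      _ < (N₀ : ℝ) := by exact_mod_cast Nat.lt_succ_self _
  -- the candidate dual vectors
  set vE : ↥E := ∑ i, (d i : ℝ) • wv i with hvE
  set zE : ℕ → ↥E := fun Nn => (Nn : ℝ) • vE + wv i₀ with hzE
  have hpair : ∀ (x : ↥E) (Nn : ℕ),
      (x : V n) ⬝ᵥ ((zE Nn : ↥E) : V n) = (Nn : ℝ) * Rf x + bE.repr x i₀ := by
    intro x Nn
    have hcoez : ((zE Nn : ↥E) : V n) = (Nn : ℝ) • ((vE : ↥E) : V n) + ((wv i₀ : ↥E) : V n) := by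
      simp [hzE]
    have hcoev : ((vE : ↥E) : V n) = ∑ i, (d i : ℝ) • ((wv i : ↥E) : V n) := by
      simp [hvE]
    rw [hcoez, dotProduct_add, hcoev, dotProduct_smul, dotProduct_sum', hrepr]
    simp only [dotProduct_smul, smul_eq_mul, hrepr, hRf]
  -- membership in the dual semigroup
  have hzmem : ∀ Nn : ℕ, N₀ ≤ Nn → ((zE Nn : ↥E) : V n) ∈ dualSemigroup Γ := by
    intro Nn hNn
    have hsdot : ∀ (s : V n) (hs : s ∈ S), ((zE Nn : ↥E) : V n) ⬝ᵥ s =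
        (Nn : ℝ) * Rf ⟨s, hΛE s (hΓΛ s (hSΓ s hs))⟩ +
        bE.repr ⟨s, hΛE s (hΓΛ s (hSΓ s hs))⟩ i₀ := by
      intro s hs
      rw [dotProduct_comm]
      exact hpair ⟨s, hΛE s (hΓΛ s (hSΓ s hs))⟩ Nn
    constructor
    · refine ⟨?_, ?_⟩
      · show ((zE Nn : ↥E) : V n) ∈ Submodule.span ℝ (diffSet Γ)
        exact (zE Nn).2
      · have hγ : ∀ γ, γ ∈ Γ → ∃ mz : ℤ, ((zE Nn : ↥E) : V n) ⬝ᵥ γ = (mz : ℝ) := by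
          intro γ hγm
          rw [← hSgen] at hγm
          replace hγm : γ ∈ AddSubmonoid.closure (S : Set (V n)) := hγm
          induction hγm using AddSubmonoid.closure_induction with
          | mem s hs =>
              have hsS : s ∈ S := hs
              choose mz hmz using fun i => hreprInt s (hΓΛ s (hSΓ s hsS)) i
              refine ⟨Nn * (∑ i, d i * mz i) + mz i₀, ?_⟩
              rw [hsdot s hsS]
              simp only [hRf, hmz]
              push_cast
              ring
          | zero => exact ⟨0, by simp⟩
          | add a bb ha hb iha ihb =>
              obtain ⟨ma, hma⟩ := iha
              obtain ⟨mb, hmb⟩ := ihb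
              exact ⟨ma + mb, by rw [dotProduct_add, hma, hmb]; push_cast; ring⟩
        rintro v ⟨γ₁, h1, γ₂, h2, rfl⟩
        obtain ⟨a, ha⟩ := hγ γ₁ h1
        obtain ⟨bb, hbb⟩ := hγ γ₂ h2
        exact ⟨a - bb, by rw [dotProduct_sub, ha, hbb]; push_cast; ring⟩
    · intro x hx
      obtain ⟨k, cc, vv, hcc, hvv, rfl⟩ := hx
      have hγ : ∀ γ, γ ∈ Γ → 0 ≤ γ ⬝ᵥ ((zE Nn : ↥E) : V n) := by
        intro γ hγm
        rw [← hSgen] at hγm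
        replace hγm : γ ∈ AddSubmonoid.closure (S : Set (V n)) := hγm
        induction hγm using AddSubmonoid.closure_induction with
        | mem s hs =>
            have hsS : s ∈ S := hs
            rcases eq_or_ne s 0 with rfl | hs0
            · simp
            · have hsS₀ : s ∈ S₀ := Finset.mem_erase.mpr ⟨hs0, hsS⟩
              rw [dotProduct_comm, hsdot s hsS]
              have h1 : (1 : ℝ) ≤ Rf ⟨s, hΛE s (hΓΛ s (hSΓ s hsS))⟩ := hRf_pos s hsS₀ _
              have h2 : |bE.repr ⟨s, hΛE s (hΓΛ s (hSΓ s hsS))⟩ i₀| < (N₀ : ℝ) := hN₀b s hsS₀ _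
              have hNn' : (N₀ : ℝ) ≤ (Nn : ℝ) := by exact_mod_cast hNn
              have habs := neg_abs_le (bE.repr ⟨s, hΛE s (hΓΛ s (hSΓ s hsS))⟩ i₀)
              have h3 : (Nn : ℝ) * 1 ≤ (Nn : ℝ) * Rf ⟨s, hΛE s (hΓΛ s (hSΓ s hsS))⟩ :=
                mul_le_mul_of_nonneg_left h1 (Nat.cast_nonneg _)
              linarith
        | zero => simp
        | add a bb ha hb iha ihb =>
            rw [add_dotProduct]
            exact add_nonneg iha ihb
      rw [sum_dotProduct']
      refine Finset.sum_nonneg fun i _ => ?_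
      rw [smul_dotProduct]
      exact smul_nonneg (hcc i) (hγ _ (hvv i))
  -- final contradiction
  have e1 := hz _ (hzmem N₀ le_rfl)
  have e2 := hz _ (hzmem (N₀ + 1) (Nat.le_succ _))
  have hw1 : w ⬝ᵥ ((zE N₀ : ↥E) : V n) = (N₀ : ℝ) * Rf wE + bE.repr wE i₀ := hpair wE N₀
  have hw2 : w ⬝ᵥ ((zE (N₀ + 1) : ↥E) : V n) =
      ((N₀ : ℝ) + 1) * Rf wE + bE.repr wE i₀ := by
    have := hpair wE (N₀ + 1)
    rwa [Nat.cast_add, Nat.cast_one] at this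
  rw [hw1] at e1
  rw [hw2] at e2
  have hRf0 : Rf wE = 0 := by linarith
  rw [hRf0] at e1
  apply hi₀
  linarith


/-- A lift `ι : Γ → Γ̃` of a positive affine semigroup is injective. -/
theorem lift_injective {n N : ℕ} (Γ : Set (V n)) (Γ' : Set (V N))
    (hΓ : IsAffineSemigroup Γ) (hpos : IsPositive Γ)
    (ι : (V n) →ₗ[ℝ] (V N)) (hlift : IsLift Γ Γ' ι) :
    Set.InjOn ι Γ := by
  intro x hx y hy hxy
  have hw : x - y ∈ diffSet Γ := ⟨x, hx, y, hy, rfl⟩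
  have hzero : ∀ z ∈ dualSemigroup Γ, (x - y) ⬝ᵥ z = 0 := by
    intro z hzmem
    obtain ⟨y', _, hpair⟩ := hlift.adjoint_surj z hzmem
    rw [sub_dotProduct, hpair x hx, hpair y hy, hxy, sub_self]
  exact sub_eq_zero.mp (sep_lemma hΓ hpos hw hzero)

end
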